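/- Let p, q ∈ (1,∞), k > −1, n a nonnegative integer, and x ∈ [0, π_{p,q}/2]. Then ∫₀^x sin_{p,q}^k(t) · cos_{p,q}^{pn+1}(t) dt = ∑_{m=0}^n [(−1)^m/(k+1+qm)] · C(n,m) · sin_{p,q}^{k+1+qm}(x), where C(n,m) is the binomial coefficient. -/

import Mathlib

open Set MeasureTheory Filter Topology

/-- Generalized arcsine: `arcsin_{p,q}(x) = ∫₀ˣ (1 - tᵠ)^(-1/p) dt`. -/
noncomputable def gArcsin (p q x : ℝ) : ℝ := ∫ t in (0:ℝ)..x, (1 - t ^ q) ^ (-(1 / p))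

/-- Generalized pi: `π_{p,q} = 2 ∫₀¹ (1 - tᵠ)^(-1/p) dt`. -/
noncomputable def gPi (p q : ℝ) : ℝ := 2 * gArcsin p q 1

/-- `S` is the generalized sine `sin_{p,q}` (the inverse of `gArcsin p q` on `[0,1]`). -/
def IsGSin (p q : ℝ) (S : ℝ → ℝ) : Prop :=
  ∀ y ∈ Icc (0:ℝ) 1, S (gArcsin p q y) = y

/-- `C` is the generalized cosine `cos_{p,q}`, the derivative of `S = sin_{p,q}`
on `[0, π_{p,q}/2]`. -/
def IsGCos (p q : ℝ) (S C : ℝ → ℝ) : Prop :=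
  ∀ x ∈ Icc (0:ℝ) (gPi p q / 2), HasDerivWithinAt S (C x) (Icc (0:ℝ) (gPi p q / 2)) x

section Aux

variable {p q : ℝ} {S C : ℝ → ℝ}

lemma base_nonneg (hq : 1 < q) {t : ℝ} (ht : t ∈ Icc (0:ℝ) 1) : 0 ≤ 1 - t ^ q := by
  have : t ^ q ≤ 1 := Real.rpow_le_one ht.1 ht.2 (by linarith)
  linarith

lemma base_pos (hq : 1 < q) {t : ℝ} (ht0 : 0 ≤ t) (ht1 : t < 1) : 0 < 1 - t ^ q := by
  have : t ^ q < 1 := by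
    rcases eq_or_lt_of_le ht0 with h | h
    · rw [← h, Real.zero_rpow (by positivity)]; norm_num
    · calc t ^ q ≤ t ^ (1:ℝ) := Real.rpow_le_rpow_of_exponent_ge h ht1.le (by linarith)
        _ = t := Real.rpow_one t
        _ < 1 := ht1
  linarith

lemma f0_meas : Measurable fun t : ℝ => (1 - t ^ q) ^ (-(1 / p)) := by
  fun_prop

lemma f0_integrable (hp : 1 < p) (hq : 1 < q) {a b : ℝ} (ha : a ∈ Icc (0:ℝ) 1)
    (hb : b ∈ Icc (0:ℝ) 1) :
    IntervalIntegrable (fun t : ℝ => (1 - t ^ q) ^ (-(1 / p))) volume a b := by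
  have h01 : IntervalIntegrable (fun t : ℝ => (1 - t ^ q) ^ (-(1 / p))) volume 0 1 := by
    have hcomp : IntervalIntegrable (fun t : ℝ => (1 - t) ^ (-(1 / p))) volume 0 1 := by
      have h1p : -1 < -(1/p) := by
        have : 1/p < 1 := by rw [div_lt_one (by linarith)]; linarith
        linarith
      have := (intervalIntegral.intervalIntegrable_rpow' (a := 0) (b := 1) h1p).comp_sub_left 1
      simpa using this.symm
    refine hcomp.mono_fun f0_meas.aestronglyMeasurable ?_
    rw [Filter.EventuallyLE, ae_restrict_iff' measurableSet_uIoc]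
    filter_upwards with t ht
    rw [uIoc_of_le (by norm_num : (0:ℝ) ≤ 1)] at ht
    obtain ⟨ht1, ht2⟩ := ht
    have h1 : 0 ≤ 1 - t ^ q := base_nonneg hq ⟨ht1.le, ht2⟩
    have h2 : 1 - t ^ q ≥ 1 - t := by
      have : t ^ q ≤ t := by
        calc t ^ q ≤ t ^ (1:ℝ) := Real.rpow_le_rpow_of_exponent_ge ht1 ht2 (by linarith)
          _ = t := Real.rpow_one t
      linarith
    simp only [Real.norm_eq_abs, abs_of_nonneg (Real.rpow_nonneg h1 _),
      abs_of_nonneg (Real.rpow_nonneg (by linarith : (0:ℝ) ≤ 1 - t) _)]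
    rcases eq_or_lt_of_le ht2 with h | h
    · subst h
      rw [Real.one_rpow, sub_self, Real.zero_rpow (neg_ne_zero.mpr (by positivity))]
    · exact Real.rpow_le_rpow_of_nonpos (by linarith) h2
        (by simp; positivity)
  refine h01.mono_set ?_
  rw [uIcc_of_le (by norm_num : (0:ℝ) ≤ 1)]
  exact uIcc_subset_Icc ha hb

lemma gArcsin_zero : gArcsin p q 0 = 0 := intervalIntegral.integral_same

lemma gArcsin_one : gArcsin p q 1 = gPi p q / 2 := by rw [gPi]; ring

lemma gArcsin_continuousOn (hp : 1 < p) (hq : 1 < q) :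
    ContinuousOn (gArcsin p q) (Icc 0 1) := by
  have := intervalIntegral.continuousOn_primitive_interval'
    (f0_integrable hp hq (left_mem_Icc.mpr zero_le_one) (right_mem_Icc.mpr zero_le_one))
    (by rw [uIcc_of_le zero_le_one]; exact left_mem_Icc.mpr zero_le_one)
  rwa [uIcc_of_le zero_le_one] at this

lemma gArcsin_strictMonoOn (hp : 1 < p) (hq : 1 < q) :
    StrictMonoOn (gArcsin p q) (Icc 0 1) := by
  intro a ha b hb hab
  have h1 : gArcsin p q b - gArcsin p q a = ∫ t in a..b, (1 - t ^ q) ^ (-(1 / p)) := by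
    rw [gArcsin, gArcsin, ← intervalIntegral.integral_add_adjacent_intervals
      (f0_integrable hp hq (left_mem_Icc.mpr zero_le_one) ha)
      (f0_integrable hp hq ha hb)]
    ring
  have h2 : 0 < ∫ t in a..b, (1 - t ^ q) ^ (-(1 / p)) := by
    refine intervalIntegral.intervalIntegral_pos_of_pos_on (f0_integrable hp hq ha hb) ?_ hab
    intro t ht
    have h3 : 0 < 1 - t ^ q := base_pos hq (le_trans ha.1 ht.1.le) (lt_of_lt_of_le ht.2 hb.2)
    positivity
  linarith

lemma gPi_pos (hp : 1 < p) (hq : 1 < q) : 0 < gPi p q := by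
  have := gArcsin_strictMonoOn hp hq (left_mem_Icc.mpr zero_le_one)
    (right_mem_Icc.mpr zero_le_one) zero_lt_one
  rw [gArcsin_zero] at this
  rw [gPi]; linarith

lemma gArcsin_surj (hp : 1 < p) (hq : 1 < q) {x : ℝ} (hx : x ∈ Icc 0 (gPi p q / 2)) :
    ∃ y ∈ Icc (0:ℝ) 1, gArcsin p q y = x := by
  have h1 : gArcsin p q 1 = gPi p q / 2 := gArcsin_one
  have := intermediate_value_Icc zero_le_one (gArcsin_continuousOn hp hq)
  rw [gArcsin_zero, h1] at this
  obtain ⟨y, hy, hxy⟩ := this hx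
  exact ⟨y, hy, hxy⟩

lemma S_spec (hp : 1 < p) (hq : 1 < q) (hS : IsGSin p q S) {x : ℝ}
    (hx : x ∈ Icc 0 (gPi p q / 2)) :
    S x ∈ Icc (0:ℝ) 1 ∧ gArcsin p q (S x) = x := by
  obtain ⟨y, hy, hxy⟩ := gArcsin_surj hp hq hx
  have : S x = y := by rw [← hxy, hS y hy]
  rw [this]; exact ⟨hy, hxy⟩

lemma S_mem_Ioo (hp : 1 < p) (hq : 1 < q) (hS : IsGSin p q S) {x : ℝ}
    (hx : x ∈ Ioo 0 (gPi p q / 2)) : S x ∈ Ioo (0:ℝ) 1 := by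
  obtain ⟨hmem, hGx⟩ := S_spec hp hq hS (Ioo_subset_Icc_self hx)
  constructor
  · rcases eq_or_lt_of_le hmem.1 with h | h
    · exfalso
      have : gArcsin p q (S x) = 0 := by rw [← h, gArcsin_zero]
      rw [hGx] at this; exact absurd this (ne_of_gt hx.1)
    · exact h
  · rcases eq_or_lt_of_le hmem.2 with h | h
    · exfalso
      have : gArcsin p q (S x) = gPi p q / 2 := by rw [h, gArcsin_one]
      rw [hGx] at this; exact absurd this (ne_of_lt hx.2)
    · exact h

lemma S_pos (hp : 1 < p) (hq : 1 < q) (hS : IsGSin p q S) {x : ℝ}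
    (hx : x ∈ Ioc 0 (gPi p q / 2)) : 0 < S x := by
  obtain ⟨hmem, hGx⟩ := S_spec hp hq hS ⟨hx.1.le, hx.2⟩
  rcases eq_or_lt_of_le hmem.1 with h | h
  · exfalso
    have : gArcsin p q (S x) = 0 := by rw [← h, gArcsin_zero]
    rw [hGx] at this; exact absurd this (ne_of_gt hx.1)
  · exact h

lemma S_monotoneOn (hp : 1 < p) (hq : 1 < q) (hS : IsGSin p q S) {x₁ x₂ : ℝ}
    (h1 : x₁ ∈ Icc 0 (gPi p q / 2)) (h2 : x₂ ∈ Icc 0 (gPi p q / 2)) (h12 : x₁ ≤ x₂) :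
    S x₁ ≤ S x₂ := by
  obtain ⟨hm1, hG1⟩ := S_spec hp hq hS h1
  obtain ⟨hm2, hG2⟩ := S_spec hp hq hS h2
  by_contra h
  push_neg at h
  have := gArcsin_strictMonoOn hp hq hm2 hm1 h
  rw [hG1, hG2] at this
  linarith

lemma S_hasDerivAt (hp : 1 < p) (hq : 1 < q) (hS : IsGSin p q S) (hC : IsGCos p q S C)
    {x : ℝ} (hx : x ∈ Ioo 0 (gPi p q / 2)) :
    HasDerivAt S (C x) x ∧ C x = (1 - S x ^ q) ^ (1 / p) := by
  have hIccmem : Icc (0:ℝ) (gPi p q / 2) ∈ 𝓝 x := Icc_mem_nhds hx.1 hx.2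
  have hd1 : HasDerivAt S (C x) x := (hC x (Ioo_subset_Icc_self hx)).hasDerivAt hIccmem
  refine ⟨hd1, ?_⟩
  set y := S x with hy
  have hyI : y ∈ Ioo (0:ℝ) 1 := S_mem_Ioo hp hq hS hx
  have hbase : 0 < 1 - y ^ q := base_pos hq hyI.1.le hyI.2
  have hG : HasDerivAt (gArcsin p q) ((1 - y ^ q) ^ (-(1/p))) y := by
    refine intervalIntegral.integral_hasDerivAt_right
      (f0_integrable hp hq (left_mem_Icc.mpr zero_le_one) (Ioo_subset_Icc_self hyI)) ?_ ?_
    · exact ⟨univ, univ_mem, f0_meas.aestronglyMeasurable⟩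
    · have h1 : ContinuousAt (fun t : ℝ => 1 - t ^ q) y :=
        continuousAt_const.sub (Real.continuousAt_rpow_const _ _ (Or.inl (ne_of_gt hyI.1)))
      exact h1.rpow_const (Or.inl (ne_of_gt hbase))
  have hGS : ∀ᶠ u in 𝓝 x, gArcsin p q (S u) = u := by
    filter_upwards [Icc_mem_nhds hx.1 hx.2] with u hu
    exact (S_spec hp hq hS hu).2
  have hd2 : HasDerivAt S (((1 - y ^ q) ^ (-(1/p)))⁻¹) x :=
    HasDerivAt.of_local_left_inverse hd1.continuousAt hG (by positivity) hGS
  have huniq : C x = ((1 - y ^ q) ^ (-(1/p)))⁻¹ := hd1.unique hd2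
  rw [huniq, Real.rpow_neg hbase.le, inv_inv]

lemma g_integrable (hp : 1 < p) (hq : 1 < q) {k : ℝ} (hk : -1 < k) (n : ℕ)
    (hS : IsGSin p q S) (hC : IsGCos p q S C) {x : ℝ} (hx : x ∈ Icc 0 (gPi p q / 2)) :
    IntervalIntegrable (fun t => S t ^ k * (1 - S t ^ q) ^ ((n:ℝ) + 1/p)) volume 0 x := by
  set P2 := gPi p q / 2 with hP2
  set g : ℝ → ℝ := fun t => S t ^ k * (1 - S t ^ q) ^ ((n:ℝ) + 1/p) with hgdef
  have hq0 : (0:ℝ) < q := by linarith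
  have hp0 : (0:ℝ) < p := by linarith
  have hScont : ContinuousOn S (Icc 0 P2) := fun t ht => (hC t ht).continuousWithinAt
  have hexp : (0:ℝ) ≤ (n:ℝ) + 1/p := by positivity
  -- continuity of g away from 0
  have hgc : ContinuousOn g (Ioc 0 P2) := by
    have hS' : ContinuousOn S (Ioc 0 P2) := hScont.mono Ioc_subset_Icc_self
    have h1 : ContinuousOn (fun t => S t ^ k) (Ioc 0 P2) :=
      hS'.rpow_const fun t ht => Or.inl (ne_of_gt (S_pos hp hq hS ht))
    have h2 : ContinuousOn (fun t => (1 - S t ^ q) ^ ((n:ℝ) + 1/p)) (Ioc 0 P2) :=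
      (continuousOn_const.sub (hS'.rpow_const fun t ht => Or.inr hq0.le)).rpow_const
        fun t ht => Or.inr hexp
    exact h1.mul h2
  rcases le_or_gt 0 k with hk0 | hk0
  · -- easy case : continuous on the whole interval
    have hgc' : ContinuousOn g (Icc 0 x) := by
      have hsub : Icc (0:ℝ) x ⊆ Icc 0 P2 := Icc_subset_Icc le_rfl hx.2
      have hS' : ContinuousOn S (Icc 0 x) := hScont.mono hsub
      exact (hS'.rpow_const fun t ht => Or.inr hk0).mul
        ((continuousOn_const.sub (hS'.rpow_const fun t ht => Or.inr hq0.le)).rpow_const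
          fun t ht => Or.inr hexp)
    exact hgc'.intervalIntegrable_of_Icc hx.1
  · -- hard case : k < 0, singularity at 0
    rcases eq_or_lt_of_le hx.1 with hx0 | hx0
    · rw [← hx0]
    set a0 := gArcsin p q 2⁻¹ with ha0
    have hhalf : (2⁻¹:ℝ) ∈ Icc (0:ℝ) 1 := by norm_num
    have h0m : (0:ℝ) ∈ Icc (0:ℝ) 1 := left_mem_Icc.mpr zero_le_one
    have h1m : (1:ℝ) ∈ Icc (0:ℝ) 1 := right_mem_Icc.mpr zero_le_one
    have ha0pos : 0 < a0 := by
      have := gArcsin_strictMonoOn hp hq h0m hhalf (by norm_num)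
      rwa [gArcsin_zero] at this
    have ha0le : a0 ≤ P2 := by
      have := gArcsin_strictMonoOn hp hq hhalf h1m (by norm_num)
      rw [gArcsin_one] at this
      exact this.le
    have hSa0 : S a0 = 2⁻¹ := hS 2⁻¹ hhalf
    set b0 := min a0 x with hb0
    have hb0pos : 0 < b0 := lt_min ha0pos hx0
    have hb0x : b0 ≤ x := min_le_right _ _
    have hb0P : b0 ∈ Icc 0 P2 := ⟨hb0pos.le, le_trans hb0x hx.2⟩
    -- constant
    have hAbase : 0 < 1 - (2⁻¹:ℝ) ^ q := base_pos hq (by norm_num) (by norm_num)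
    set A := (1 - (2⁻¹:ℝ) ^ q) ^ (-(1/p)) with hA
    have hApos : 0 < A := by positivity
    -- lower bound for S t on (0, b0]
    have hlow : ∀ t ∈ Ioc (0:ℝ) b0, t / A ≤ S t := by
      intro t ht
      have htI : t ∈ Icc 0 P2 := ⟨ht.1.le, le_trans ht.2 hb0P.2⟩
      obtain ⟨hSt01, hGSt⟩ := S_spec hp hq hS htI
      have hSthalf : S t ≤ 2⁻¹ := by
        rw [← hSa0]
        exact S_monotoneOn hp hq hS htI ⟨ha0pos.le, ha0le⟩
          (le_trans ht.2 (min_le_left _ _))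
      have key : t ≤ A * S t := by
        have h1 : gArcsin p q (S t) ≤ ∫ s in (0:ℝ)..(S t), A := by
          refine intervalIntegral.integral_mono_on hSt01.1
            (f0_integrable hp hq h0m hSt01) intervalIntegrable_const ?_
          intro s hs
          have hs1 : s ≤ 2⁻¹ := le_trans hs.2 hSthalf
          have hsq : s ^ q ≤ (2⁻¹:ℝ) ^ q := Real.rpow_le_rpow hs.1 hs1 hq0.le
          exact Real.rpow_le_rpow_of_nonpos hAbase (by linarith)
            (by simp; positivity)
        rw [intervalIntegral.integral_const, smul_eq_mul, sub_zero, hGSt] at h1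
        linarith [h1, mul_comm (S t) A]
      rw [div_le_iff₀ hApos]
      calc t ≤ A * S t := key
        _ = S t * A := mul_comm _ _
    have hsub01 : Ioc (0:ℝ) b0 ⊆ Ioc 0 P2 := Ioc_subset_Ioc le_rfl hb0P.2
    have piece1 : IntervalIntegrable g volume 0 b0 := by
      rw [intervalIntegrable_iff_integrableOn_Ioc_of_le hb0pos.le]
      have hbound : IntegrableOn (fun t : ℝ => t ^ k * (A ^ k)⁻¹) (Ioc 0 b0) volume := by
        have := (intervalIntegral.intervalIntegrable_rpow' (a := 0) (b := b0) hk).mul_const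
          (A ^ k)⁻¹
        rwa [intervalIntegrable_iff_integrableOn_Ioc_of_le hb0pos.le] at this
      refine Integrable.mono hbound
        ((hgc.mono hsub01).aestronglyMeasurable measurableSet_Ioc) ?_
      rw [ae_restrict_iff' measurableSet_Ioc]
      filter_upwards with t ht
      have htP : t ∈ Ioc 0 P2 := hsub01 ht
      have h1 : 0 < S t := S_pos hp hq hS htP
      have hSt01 := (S_spec hp hq hS ⟨htP.1.le, htP.2⟩).1
      have hb1 : 0 ≤ 1 - S t ^ q := base_nonneg hq hSt01
      have hb2 : 1 - S t ^ q ≤ 1 := by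
        have : 0 ≤ S t ^ q := Real.rpow_nonneg h1.le q
        linarith
      have h2 : (1 - S t ^ q) ^ ((n:ℝ) + 1/p) ≤ 1 := Real.rpow_le_one hb1 hb2 hexp
      have h3 : S t ^ k ≤ (t / A) ^ k :=
        Real.rpow_le_rpow_of_nonpos (div_pos ht.1 hApos) (hlow t ht) hk0.le
      have h4 : (t / A) ^ k = t ^ k * (A ^ k)⁻¹ := by
        rw [Real.div_rpow ht.1.le hApos.le, div_eq_mul_inv]
      have hg0 : 0 ≤ g t := by
        have := Real.rpow_nonneg h1.le k
        have := Real.rpow_nonneg hb1 ((n:ℝ) + 1/p)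
        simp only [hgdef]
        positivity
      have hB0 : 0 ≤ t ^ k * (A ^ k)⁻¹ := by
        have := Real.rpow_nonneg ht.1.le k
        have := Real.rpow_nonneg hApos.le k
        positivity
      rw [Real.norm_eq_abs, Real.norm_eq_abs, abs_of_nonneg hg0, abs_of_nonneg hB0]
      calc g t ≤ S t ^ k * 1 := by
            simp only [hgdef]
            exact mul_le_mul_of_nonneg_left h2 (Real.rpow_nonneg h1.le k)
        _ = S t ^ k := mul_one _
        _ ≤ (t / A) ^ k := h3
        _ = t ^ k * (A ^ k)⁻¹ := h4
    have piece2 : IntervalIntegrable g volume b0 x := by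
      have hsub : Icc b0 x ⊆ Ioc 0 P2 := fun t ht =>
        ⟨lt_of_lt_of_le hb0pos ht.1, le_trans ht.2 hx.2⟩
      exact (hgc.mono hsub).intervalIntegrable_of_Icc hb0x
    exact piece1.trans piece2

end Aux

/-- Remark 3.2: for `k > -1` and `n = 0,1,2,…`,
`∫₀ˣ sin_{p,q}ᵏ t · cos_{p,q}^{pn+1} t dt
  = ∑_{m=0}ⁿ ((-1)ᵐ/(k+1+qm)) C(n,m) sin_{p,q}^{k+1+qm} x`. -/
theorem stmt_5 (p q k : ℝ) (n : ℕ) (x : ℝ) (hp : 1 < p) (hq : 1 < q) (hk : -1 < k)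
    (S C : ℝ → ℝ) (hS : IsGSin p q S) (hC : IsGCos p q S C)
    (hx : x ∈ Icc (0:ℝ) (gPi p q / 2)) :
    ∫ t in (0:ℝ)..x, S t ^ k * C t ^ (p * (n : ℝ) + 1) =
      ∑ m ∈ Finset.range (n + 1),
        ((-1 : ℝ) ^ m / (k + 1 + q * (m : ℝ))) * (n.choose m : ℝ) *
          S x ^ (k + 1 + q * (m : ℝ)) := by
  obtain ⟨hx0, hx2⟩ := hx
  have hq0 : (0:ℝ) < q := by linarith
  have hp0 : (0:ℝ) < p := by linarith
  have hS0 : S 0 = 0 := by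
    have := hS 0 (left_mem_Icc.mpr zero_le_one)
    rwa [gArcsin_zero] at this
  have hepos : ∀ m : ℕ, 0 < k + 1 + q * (m : ℝ) := fun m => by
    have : (0:ℝ) ≤ q * m := by positivity
    linarith
  set g : ℝ → ℝ := fun t => S t ^ k * (1 - S t ^ q) ^ ((n:ℝ) + 1/p) with hgdef
  set F : ℝ → ℝ := fun y => ∑ m ∈ Finset.range (n + 1),
      ((-1 : ℝ) ^ m / (k + 1 + q * (m : ℝ))) * (n.choose m : ℝ) *
        S y ^ (k + 1 + q * (m : ℝ)) with hFdef
  -- Step 1 : replace the integrand a.e.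
  have step1 : ∫ t in (0:ℝ)..x, S t ^ k * C t ^ (p * (n : ℝ) + 1) = ∫ t in (0:ℝ)..x, g t := by
    apply intervalIntegral.integral_congr_ae
    have hxnull : (volume : Measure ℝ) {x} = 0 := measure_singleton x
    filter_upwards [compl_mem_ae_iff.mpr hxnull] with t htne htm
    rw [uIoc_of_le hx0] at htm
    have htI : t ∈ Ioo 0 (gPi p q / 2) :=
      ⟨htm.1, lt_of_lt_of_le (lt_of_le_of_ne htm.2 htne) hx2⟩
    obtain ⟨-, hCt⟩ := S_hasDerivAt hp hq hS hC htI
    have hst := S_mem_Ioo hp hq hS htI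
    have hb : 0 < 1 - S t ^ q := base_pos hq hst.1.le hst.2
    rw [hCt, ← Real.rpow_mul hb.le]
    simp only [hgdef]
    congr 2
    field_simp
  -- Step 2 : derivative of F on the interior
  have hFderiv : ∀ t ∈ Ioo (0:ℝ) x, HasDerivWithinAt F (g t) (Ioi t) t := by
    intro t ht
    have htI : t ∈ Ioo 0 (gPi p q / 2) := ⟨ht.1, lt_of_lt_of_le ht.2 hx2⟩
    obtain ⟨hdS, hCt⟩ := S_hasDerivAt hp hq hS hC htI
    have hst := S_mem_Ioo hp hq hS htI
    have hb : 0 < 1 - S t ^ q := base_pos hq hst.1.le hst.2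
    have hterm : ∀ m ∈ Finset.range (n + 1),
        HasDerivAt (fun y => ((-1 : ℝ) ^ m / (k + 1 + q * (m : ℝ))) * (n.choose m : ℝ) *
          S y ^ (k + 1 + q * (m : ℝ)))
          (((-1 : ℝ) ^ m / (k + 1 + q * (m : ℝ))) * (n.choose m : ℝ) *
            (C t * (k + 1 + q * (m : ℝ)) * S t ^ (k + 1 + q * (m : ℝ) - 1))) t := by
      intro m _
      exact (hdS.rpow_const (Or.inl (ne_of_gt hst.1))).const_mul _
    have hsum := HasDerivAt.fun_sum hterm
    have hval : ∑ m ∈ Finset.range (n + 1),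
        ((-1 : ℝ) ^ m / (k + 1 + q * (m : ℝ))) * (n.choose m : ℝ) *
          (C t * (k + 1 + q * (m : ℝ)) * S t ^ (k + 1 + q * (m : ℝ) - 1)) = g t := by
      have hkey : ∀ m ∈ Finset.range (n + 1),
          ((-1 : ℝ) ^ m / (k + 1 + q * (m : ℝ))) * (n.choose m : ℝ) *
            (C t * (k + 1 + q * (m : ℝ)) * S t ^ (k + 1 + q * (m : ℝ) - 1)) =
          ((-(S t ^ q)) ^ m * 1 ^ (n - m) * (n.choose m : ℝ)) * (S t ^ k * C t) := by
        intro m _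
        have h1 : S t ^ (k + 1 + q * (m : ℝ) - 1) = S t ^ k * (S t ^ q) ^ m := by
          have he : k + 1 + q * (m : ℝ) - 1 = k + q * (m : ℝ) := by ring
          rw [he, Real.rpow_add hst.1, Real.rpow_mul hst.1.le, Real.rpow_natCast]
        rw [h1, neg_pow, one_pow]
        have hene : k + 1 + q * (m : ℝ) ≠ 0 := ne_of_gt (hepos m)
        field_simp
        ring
      rw [Finset.sum_congr rfl hkey, ← Finset.sum_mul, ← add_pow]
      have h2 : (1 - S t ^ q) ^ ((n:ℝ) + 1/p) = (1 - S t ^ q) ^ n * (1 - S t ^ q) ^ (1/p) := by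
        rw [Real.rpow_add hb, Real.rpow_natCast]
      simp only [hgdef]
      rw [h2, hCt]
      ring_nf
    rw [hval] at hsum
    exact hsum.hasDerivWithinAt
  -- Step 3 : continuity of F
  have hFcont : ContinuousOn F (Icc 0 x) := by
    have hScont0 : ContinuousOn S (Icc 0 (gPi p q / 2)) := fun t ht =>
      (hC t ht).continuousWithinAt
    have hScont : ContinuousOn S (Icc 0 x) := hScont0.mono (Icc_subset_Icc le_rfl hx2)
    apply continuousOn_finset_sum
    intro m _
    exact continuousOn_const.mul (hScont.rpow_const fun t ht => Or.inr (hepos m).le)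
  -- Step 4 : FTC
  have step4 : ∫ t in (0:ℝ)..x, g t = F x - F 0 :=
    intervalIntegral.integral_eq_sub_of_hasDeriv_right_of_le hx0 hFcont hFderiv
      (g_integrable hp hq hk n hS hC ⟨hx0, hx2⟩)
  have hF0 : F 0 = 0 := by
    simp only [hFdef, hS0]
    refine Finset.sum_eq_zero fun m _ => ?_
    rw [Real.zero_rpow (ne_of_gt (hepos m)), mul_zero]
  rw [step1, step4, hF0, sub_zero]
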